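/- Lemma (Lipschitz continuity of the discretized value function): For all (t_n, x₁, x₂, i) ∈ Π × ℝ^d × ℝ^d × I_q, |v̄_Π(t_n, x₁, i) − v̄_Π(t_n, x₂, i)| ≤ C_n |x₁ − x₂|, where C_N = e^{−ρ t_N} C_g and C_n = h C_f e^{−ρ t_n} + C_{n+1}(1 + L h) for n = N−1,…,0, with L := C_b + C_σ²/2; in particular there exists C > 0 such that C_n ≤ C e^{−ρ t_n} e^{L(T − t_n)} for all n. -/

import Mathlib

open MeasureTheory ProbabilityTheory

/-- The Euclidean norm on `Fin n → ℝ`. -/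
noncomputable def vnorm {n : ℕ} (x : Fin n → ℝ) : ℝ := Real.sqrt (∑ i, x i ^ 2)

/-- The Frobenius norm of a `d × d` real matrix. -/
noncomputable def frobNorm {n : ℕ} (A : Matrix (Fin n) (Fin n) ℝ) : ℝ :=
  Real.sqrt (∑ i, ∑ j, A i j ^ 2)

/-- One step of the Euler–Maruyama scheme of step `h` at time `t` from `x` with noise `g`. -/
noncomputable def eulerStep {d : ℕ} (b : ℝ → (Fin d → ℝ) → Fin d → ℝ)
    (σ : ℝ → (Fin d → ℝ) → Matrix (Fin d) (Fin d) ℝ) (h t : ℝ) (x g : Fin d → ℝ) :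
    Fin d → ℝ :=
  fun m => x m + b t x m * h + Real.sqrt h * (σ t x).mulVec g m


open Filter Real


section aux
variable {d : ℕ}

lemma vnorm_nonneg (x : Fin d → ℝ) : 0 ≤ vnorm x := Real.sqrt_nonneg _

lemma frobNorm_nonneg (A : Matrix (Fin d) (Fin d) ℝ) : 0 ≤ frobNorm A := Real.sqrt_nonneg _

lemma sq_vnorm (x : Fin d → ℝ) : vnorm x ^ 2 = ∑ i, x i ^ 2 :=
  Real.sq_sqrt (Finset.sum_nonneg fun i _ => sq_nonneg _)

lemma sq_frobNorm (A : Matrix (Fin d) (Fin d) ℝ) : frobNorm A ^ 2 = ∑ i, ∑ j, A i j ^ 2 :=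
  Real.sq_sqrt (Finset.sum_nonneg fun i _ => Finset.sum_nonneg fun j _ => sq_nonneg _)

lemma vnorm_eq_norm (x : Fin d → ℝ) :
    vnorm x = ‖(WithLp.equiv 2 (Fin d → ℝ)).symm x‖ := by
  rw [EuclideanSpace.norm_eq]
  simp [vnorm, sq_abs]

lemma vnorm_add_le (x y : Fin d → ℝ) : vnorm (x + y) ≤ vnorm x + vnorm y := by
  rw [vnorm_eq_norm, vnorm_eq_norm, vnorm_eq_norm]
  exact norm_add_le _ _

lemma vnorm_smul (c : ℝ) (x : Fin d → ℝ) : vnorm (c • x) = |c| * vnorm x := by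
  rw [vnorm_eq_norm, vnorm_eq_norm]
  exact norm_smul c _

lemma vnorm_le_sum_abs (x : Fin d → ℝ) : vnorm x ≤ ∑ i, |x i| := by
  rw [vnorm]
  have h1 : ∑ i, x i ^ 2 ≤ (∑ i, |x i|) ^ 2 := by
    have hstep : ∀ i ∈ Finset.univ, x i ^ 2 ≤ |x i| * ∑ j, |x j| := by
      intro i _
      rw [← sq_abs]
      rw [sq]
      refine mul_le_mul_of_nonneg_left ?_ (abs_nonneg _)
      exact Finset.single_le_sum (fun j _ => abs_nonneg (x j)) (Finset.mem_univ i)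
    calc ∑ i, x i ^ 2 ≤ ∑ i, |x i| * ∑ j, |x j| := Finset.sum_le_sum hstep
    _ = (∑ i, |x i|) ^ 2 := by rw [← Finset.sum_mul, sq]
  calc Real.sqrt (∑ i, x i ^ 2) ≤ Real.sqrt ((∑ i, |x i|) ^ 2) := Real.sqrt_le_sqrt h1
  _ = ∑ i, |x i| := Real.sqrt_sq (Finset.sum_nonneg fun i _ => abs_nonneg _)

lemma continuous_vnorm : Continuous (vnorm (n := d)) := by
  unfold vnorm; fun_prop

lemma le_of_sq_le_sq' {a b : ℝ} (hb : 0 ≤ b) (h : a ^ 2 ≤ b ^ 2) (ha : 0 ≤ a) : a ≤ b := by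
  nlinarith

lemma vnorm_mulVec_le (A : Matrix (Fin d) (Fin d) ℝ) (g : Fin d → ℝ) :
    vnorm (A.mulVec g) ≤ frobNorm A * vnorm g := by
  have h2 : vnorm (A.mulVec g) ^ 2 ≤ (frobNorm A * vnorm g) ^ 2 := by
    rw [sq_vnorm, mul_pow, sq_vnorm, sq_frobNorm, Finset.sum_mul]
    refine Finset.sum_le_sum fun i _ => ?_
    simpa [Matrix.mulVec, dotProduct] using
      Finset.sum_mul_sq_le_sq_mul_sq Finset.univ (fun j => A i j) g
  exact le_of_sq_le_sq' (mul_nonneg (frobNorm_nonneg A) (vnorm_nonneg g)) h2 (vnorm_nonneg _)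

lemma continuous_of_vlip {W : (Fin d → ℝ) → ℝ} {c : ℝ}
    (hW : ∀ x y, |W x - W y| ≤ c * vnorm (x - y)) : Continuous W := by
  rw [continuous_iff_continuousAt]
  intro y
  have hb : ∀ x, dist (W x) (W y) ≤ c * vnorm (x - y) := by
    intro x; rw [Real.dist_eq]; exact hW x y
  rw [ContinuousAt, tendsto_iff_dist_tendsto_zero]
  have hcont : Continuous fun x : Fin d → ℝ => c * vnorm (x - y) := by
    exact continuous_const.mul (continuous_vnorm.comp (continuous_id.sub continuous_const))
  have h0 : Tendsto (fun x : Fin d → ℝ => c * vnorm (x - y)) (nhds y) (nhds 0) := by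
    have := hcont.tendsto y
    simpa [vnorm, sub_self] using this
  exact squeeze_zero (fun x => dist_nonneg) hb h0

lemma frobNorm_smul (c : ℝ) (A : Matrix (Fin d) (Fin d) ℝ) :
    frobNorm (c • A) = |c| * frobNorm A := by
  unfold frobNorm
  rw [← Real.sqrt_sq_eq_abs, ← Real.sqrt_mul (sq_nonneg c), Finset.mul_sum]
  congr 1
  refine Finset.sum_congr rfl fun i _ => ?_
  rw [Finset.mul_sum]
  refine Finset.sum_congr rfl fun j _ => ?_
  simp [Matrix.smul_apply, mul_pow, smul_eq_mul]

end aux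


section gauss1d

lemma Ie : Integrable (fun x : ℝ => rexp (-(1/2) * x ^ 2)) :=
  integrable_exp_neg_mul_sq (by norm_num)

lemma Ixe : Integrable (fun x : ℝ => x * rexp (-(1/2) * x ^ 2)) :=
  integrable_mul_exp_neg_mul_sq (by norm_num)

lemma Ix2e : Integrable (fun x : ℝ => x ^ 2 * rexp (-(1/2) * x ^ 2)) := by
  have hbound : ∀ x : ℝ, ‖x ^ 2 * rexp (-(1/2) * x ^ 2)‖ ≤ ‖4 * rexp (-(1/4) * x ^ 2)‖ := by
    intro x
    rw [norm_eq_abs (4 * _), abs_of_nonneg (by positivity)]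
    have h1 : x ^ 2 ≤ 4 * rexp ((1/4) * x ^ 2) := by
      have h2 : (1/4) * x ^ 2 ≤ rexp ((1/4) * x ^ 2) := by
        have := Real.add_one_le_exp ((1/4) * x ^ 2)
        nlinarith [sq_nonneg x]
      linarith
    have h3 : 0 < rexp (-(1/2) * x ^ 2) := Real.exp_pos _
    have h4 : x ^ 2 * rexp (-(1/2) * x ^ 2) ≤ 4 * rexp ((1/4) * x ^ 2) * rexp (-(1/2) * x ^ 2) := by
      exact mul_le_mul_of_nonneg_right h1 h3.le
    rw [norm_eq_abs, abs_of_nonneg (by positivity)]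
    calc x ^ 2 * rexp (-(1/2) * x ^ 2) ≤ 4 * rexp ((1/4) * x ^ 2) * rexp (-(1/2) * x ^ 2) := h4
    _ = 4 * rexp (-(1/4) * x ^ 2) := by
        rw [mul_assoc, ← Real.exp_add]; ring_nf
  refine Integrable.mono ((integrable_exp_neg_mul_sq (by norm_num : (0:ℝ) < 1/4)).const_mul 4) ?_
    (Filter.Eventually.of_forall hbound)
  exact ((measurable_id.pow_const 2).mul
    (((measurable_id.pow_const 2).const_mul _).exp)).aestronglyMeasurable

lemma intexphalf : ∫ x : ℝ, rexp (-(1/2) * x ^ 2) = Real.sqrt (2 * π) := by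
  rw [integral_gaussian]
  rw [show π / (1/2) = 2 * π by ring]

lemma A1 : ∫ x : ℝ, x * rexp (-(1/2) * x ^ 2) = 0 := by
  have key := integral_eq_zero_of_hasDerivAt_of_integrable
    (f := fun x : ℝ => -rexp (-(1/2) * x ^ 2))
    (f' := fun x : ℝ => x * rexp (-(1/2) * x ^ 2)) ?_ Ixe Ie.neg
  · exact key
  · intro x
    have h := (((hasDerivAt_pow 2 x).const_mul (-(1/2) : ℝ)).exp).neg
    convert h using 1
    · funext y; simp
    · simp only [Nat.cast_ofNat, Nat.reduceSub, pow_one]; ring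

lemma A2 : ∫ x : ℝ, x ^ 2 * rexp (-(1/2) * x ^ 2) = Real.sqrt (2 * π) := by
  have hsub := integral_eq_zero_of_hasDerivAt_of_integrable
    (f := fun x : ℝ => -(x * rexp (-(1/2) * x ^ 2)))
    (f' := fun x : ℝ => x ^ 2 * rexp (-(1/2) * x ^ 2) - rexp (-(1/2) * x ^ 2)) ?_
    (Ix2e.sub Ie) Ixe.neg
  · have := integral_sub Ix2e Ie
    rw [hsub] at this
    have h0 : ∫ x : ℝ, x ^ 2 * rexp (-(1/2) * x ^ 2) = ∫ x : ℝ, rexp (-(1/2) * x ^ 2) := by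
      linarith
    rw [h0, intexphalf]
  · intro x
    have hexp := ((hasDerivAt_pow 2 x).const_mul (-(1/2) : ℝ)).exp
    have h := ((hasDerivAt_id x).mul hexp).neg
    convert h using 1
    · funext y; simp
    · simp only [Nat.cast_ofNat, Nat.reduceSub, pow_one, id_eq]; ring

end gauss1d


section gaussReal

lemma gpdf_eq (x : ℝ) :
    gaussianPDFReal 0 1 x = (Real.sqrt (2 * π))⁻¹ * rexp (-(1/2) * x ^ 2) := by
  rw [gaussianPDFReal]
  norm_num
  left
  ring_nf

lemma gpdf_fun : gaussianPDF 0 1 = fun x => ((gaussianPDFReal 0 1 x).toNNReal : ENNReal) := by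
  funext x; rfl

lemma gaussian_integral_eq (φ : ℝ → ℝ) :
    ∫ x, φ x ∂(gaussianReal 0 1) = ∫ x, gaussianPDFReal 0 1 x * φ x := by
  rw [gaussianReal_of_var_ne_zero _ one_ne_zero, gpdf_fun,
    integral_withDensity_eq_integral_smul (measurable_gaussianPDFReal 0 1).real_toNNReal φ]
  congr 1
  funext x
  rw [NNReal.smul_def, smul_eq_mul, Real.coe_toNNReal _ (gaussianPDFReal_nonneg 0 1 x)]

lemma gaussian_integrable_iff (φ : ℝ → ℝ) :
    Integrable φ (gaussianReal 0 1) ↔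
      Integrable (fun x => gaussianPDFReal 0 1 x * φ x) := by
  rw [gaussianReal_of_var_ne_zero _ one_ne_zero, gpdf_fun,
    integrable_withDensity_iff_integrable_smul (measurable_gaussianPDFReal 0 1).real_toNNReal]
  constructor <;> intro hI <;> refine hI.congr (Filter.Eventually.of_forall fun x => ?_) <;>
    simp only [NNReal.smul_def, smul_eq_mul, Real.coe_toNNReal _ (gaussianPDFReal_nonneg 0 1 x)]

end gaussReal


section gmom

lemma sqrt2pi_pos : (0:ℝ) < Real.sqrt (2 * π) := Real.sqrt_pos.mpr (by positivity)

lemma gInt_id : Integrable (fun x : ℝ => x) (gaussianReal 0 1) := by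
  rw [gaussian_integrable_iff]
  have : (fun x : ℝ => gaussianPDFReal 0 1 x * x)
      = fun x => (Real.sqrt (2 * π))⁻¹ * (x * rexp (-(1/2) * x ^ 2)) := by
    funext x; rw [gpdf_eq]; ring
  rw [this]
  exact Ixe.const_mul _

lemma gMean : ∫ x, (fun x : ℝ => x) x ∂(gaussianReal 0 1) = 0 := by
  rw [gaussian_integral_eq]
  have : (fun x : ℝ => gaussianPDFReal 0 1 x * x)
      = fun x => (Real.sqrt (2 * π))⁻¹ * (x * rexp (-(1/2) * x ^ 2)) := by
    funext x; rw [gpdf_eq]; ring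
  rw [this, integral_const_mul, A1, mul_zero]

lemma gInt_sq : Integrable (fun x : ℝ => x * x) (gaussianReal 0 1) := by
  rw [gaussian_integrable_iff]
  have : (fun x : ℝ => gaussianPDFReal 0 1 x * (x * x))
      = fun x => (Real.sqrt (2 * π))⁻¹ * (x ^ 2 * rexp (-(1/2) * x ^ 2)) := by
    funext x; rw [gpdf_eq]; ring
  rw [this]
  exact Ix2e.const_mul _

lemma gVar : ∫ x, (fun x : ℝ => x * x) x ∂(gaussianReal 0 1) = 1 := by
  rw [gaussian_integral_eq]
  have : (fun x : ℝ => gaussianPDFReal 0 1 x * (x * x))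
      = fun x => (Real.sqrt (2 * π))⁻¹ * (x ^ 2 * rexp (-(1/2) * x ^ 2)) := by
    funext x; rw [gpdf_eq]; ring
  rw [this, integral_const_mul, A2, inv_mul_cancel₀ (ne_of_gt sqrt2pi_pos)]

lemma gInt_one : Integrable (fun _ : ℝ => (1:ℝ)) (gaussianReal 0 1) := integrable_const 1

lemma gOne : ∫ _x, (1:ℝ) ∂(gaussianReal 0 1) = 1 := by simp

end gmom

noncomputable section prodGauss

def Rg : Type := ℝ

instance : MeasurableSpace Rg := inferInstanceAs (MeasurableSpace ℝ)
instance : MeasureSpace Rg := { volume := gaussianReal 0 1 }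
instance : IsProbabilityMeasure (volume : Measure Rg) :=
  inferInstanceAs (IsProbabilityMeasure (gaussianReal 0 1))

variable {d : ℕ}

/-- indicator-style factor functions -/
def fj (j i : Fin d) : ℝ → ℝ := fun t => if i = j then t else 1

def fjl (j l i : Fin d) : ℝ → ℝ := fun t => (if i = j then t else 1) * (if i = l then t else 1)

lemma prod_fj (j : Fin d) (x : Fin d → ℝ) : (∏ i, fj j i (x i)) = x j := by
  unfold fj
  rw [Finset.prod_ite_eq' Finset.univ j x]
  simp

lemma prod_fjl (j l : Fin d) (x : Fin d → ℝ) : (∏ i, fjl j l i (x i)) = x j * x l := by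
  unfold fjl
  rw [Finset.prod_mul_distrib, Finset.prod_ite_eq' Finset.univ j x,
    Finset.prod_ite_eq' Finset.univ l x]
  simp

lemma int_fj (j i : Fin d) : Integrable (fj j i) (volume : Measure Rg) := by
  unfold fj
  by_cases hij : i = j
  · simp only [hij, if_pos rfl]
    exact gInt_id
  · simp only [if_neg hij]
    exact gInt_one

lemma int_fjl (j l i : Fin d) : Integrable (fjl j l i) (volume : Measure Rg) := by
  unfold fjl
  by_cases hij : i = j
  · by_cases hil : i = l
    · subst hij; subst hil
      simp only [if_pos rfl]
      exact gInt_sq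
    · subst hij
      simp only [if_pos rfl, if_neg hil, mul_one]
      exact gInt_id
  · by_cases hil : i = l
    · subst hil
      simp only [if_pos rfl, if_neg hij, one_mul]
      exact gInt_id
    · simp only [if_neg hij, if_neg hil, mul_one]
      exact gInt_one

lemma pi_integrable_eval (j : Fin d) :
    Integrable (fun x : Fin d → ℝ => x j) (Measure.pi fun _ : Fin d => gaussianReal 0 1) := by
  have h : Integrable (fun x : Fin d → Rg => ∏ i, fj j i (x i)) :=
    Integrable.fintype_prod (E := Rg) (f := fj j) (fun i => int_fj j i)
  have he : (fun x : Fin d → ℝ => x j) = fun x : Fin d → ℝ => ∏ i, fj j i (x i) :=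
    funext fun x => (prod_fj j x).symm
  rw [he]
  exact h

lemma pi_eval_zero (j : Fin d) :
    ∫ x : Fin d → ℝ, x j ∂(Measure.pi fun _ : Fin d => gaussianReal 0 1) = 0 := by
  have he : (fun x : Fin d → ℝ => x j) = fun x : Fin d → ℝ => ∏ i, fj j i (x i) :=
    funext fun x => (prod_fj j x).symm
  rw [he]
  have h := MeasureTheory.integral_fintype_prod_eq_prod (ι := Fin d) (E := fun _ => Rg) (μ := fun _ => volume) (fj j)
  rw [show (∫ x : Fin d → ℝ, ∏ i, fj j i (x i) ∂(Measure.pi fun _ : Fin d => gaussianReal 0 1))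
      = ∫ x : Fin d → Rg, ∏ i, fj j i (x i) ∂(Measure.pi fun _ : Fin d => (volume : Measure Rg)) from rfl, h]
  refine Finset.prod_eq_zero (Finset.mem_univ j) ?_
  rw [show fj j j = fun t : ℝ => t from funext fun t => if_pos rfl]
  exact gMean

lemma pi_integrable_eval_mul (j l : Fin d) :
    Integrable (fun x : Fin d → ℝ => x j * x l)
      (Measure.pi fun _ : Fin d => gaussianReal 0 1) := by
  have h : Integrable (fun x : Fin d → Rg => ∏ i, fjl j l i (x i)) :=
    Integrable.fintype_prod (E := Rg) (f := fjl j l) (fun i => int_fjl j l i)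
  have he : (fun x : Fin d → ℝ => x j * x l) = fun x : Fin d → ℝ => ∏ i, fjl j l i (x i) :=
    funext fun x => (prod_fjl j l x).symm
  rw [he]
  exact h

lemma pi_eval_mul (j l : Fin d) :
    ∫ x : Fin d → ℝ, x j * x l ∂(Measure.pi fun _ : Fin d => gaussianReal 0 1)
      = if j = l then 1 else 0 := by
  have he : (fun x : Fin d → ℝ => x j * x l) = fun x : Fin d → ℝ => ∏ i, fjl j l i (x i) :=
    funext fun x => (prod_fjl j l x).symm
  rw [he]
  have h := MeasureTheory.integral_fintype_prod_eq_prod (ι := Fin d) (E := fun _ => Rg) (μ := fun _ => volume) (fjl j l)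
  rw [show (∫ x : Fin d → ℝ, ∏ i, fjl j l i (x i) ∂(Measure.pi fun _ : Fin d => gaussianReal 0 1))
      = ∫ x : Fin d → Rg, ∏ i, fjl j l i (x i) ∂(Measure.pi fun _ : Fin d => (volume : Measure Rg)) from rfl, h]
  by_cases hjl : j = l
  · subst hjl
    rw [if_pos rfl]
    refine Finset.prod_eq_one fun i _ => ?_
    by_cases hij : i = j
    · subst hij
      rw [show fjl i i i = fun t : ℝ => t * t from funext fun t => by simp [fjl]]
      exact gVar
    · rw [show fjl j j i = fun _ : ℝ => (1:ℝ) from funext fun t => by simp [fjl, if_neg hij]]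
      exact gOne
  · rw [if_neg hjl]
    refine Finset.prod_eq_zero (Finset.mem_univ j) ?_
    rw [show fjl j l j = fun t : ℝ => t from funext fun t => by
      simp [fjl, if_neg (fun hh : j = l => hjl hh)]]
    exact gMean

end prodGauss



section keysec
variable {Ω : Type*} [MeasurableSpace Ω] {μ : Measure Ω} [IsProbabilityMeasure μ]
  {d : ℕ} {G : Ω → Fin d → ℝ} (hGmeas : Measurable G)
  (hG : μ.map G = Measure.pi fun _ : Fin d => gaussianReal 0 1)

include hGmeas hG

lemma muG_int (j : Fin d) : Integrable (fun ω => G ω j) μ := by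
  have h1 : Integrable (fun x : Fin d → ℝ => x j) (μ.map G) := by
    rw [hG]; exact pi_integrable_eval j
  exact (integrable_map_measure (measurable_pi_apply j).aestronglyMeasurable
    hGmeas.aemeasurable).mp h1

lemma muG_zero (j : Fin d) : ∫ ω, G ω j ∂μ = 0 := by
  have h1 := integral_map (μ := μ) (f := fun x : Fin d → ℝ => x j) hGmeas.aemeasurable
    (measurable_pi_apply j).aestronglyMeasurable
  rw [hG] at h1
  rw [← h1, pi_eval_zero]

lemma muGG_int (j l : Fin d) : Integrable (fun ω => G ω j * G ω l) μ := by
  have h1 : Integrable (fun x : Fin d → ℝ => x j * x l) (μ.map G) := by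
    rw [hG]; exact pi_integrable_eval_mul j l
  exact (integrable_map_measure
    ((measurable_pi_apply j).mul (measurable_pi_apply l)).aestronglyMeasurable
    hGmeas.aemeasurable).mp h1

lemma muGG (j l : Fin d) : ∫ ω, G ω j * G ω l ∂μ = if j = l then 1 else 0 := by
  have h1 := integral_map (μ := μ) (f := fun x : Fin d → ℝ => x j * x l) hGmeas.aemeasurable
    ((measurable_pi_apply j).mul (measurable_pi_apply l)).aestronglyMeasurable
  rw [hG] at h1
  rw [← h1, pi_eval_mul]

/-- integrability and expansion of one coordinate of `A ⬝ G` -/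
lemma S_int (A : Matrix (Fin d) (Fin d) ℝ) (m : Fin d) :
    Integrable (fun ω => ∑ j, A m j * G ω j) μ :=
  integrable_finset_sum _ fun j _ => (muG_int hGmeas hG j).const_mul _

lemma S_zero (A : Matrix (Fin d) (Fin d) ℝ) (m : Fin d) :
    ∫ ω, ∑ j, A m j * G ω j ∂μ = 0 := by
  rw [integral_finset_sum _ fun j _ => (muG_int hGmeas hG j).const_mul _]
  refine Finset.sum_eq_zero fun j _ => ?_
  rw [integral_const_mul, muG_zero hGmeas hG, mul_zero]

lemma Ssq_int (A : Matrix (Fin d) (Fin d) ℝ) (m : Fin d) :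
    Integrable (fun ω => (∑ j, A m j * G ω j) ^ 2) μ := by
  have hrw : (fun ω => (∑ j, A m j * G ω j) ^ 2)
      = fun ω => ∑ j, ∑ l, (A m j * A m l) * (G ω j * G ω l) := by
    funext ω
    rw [sq, Finset.sum_mul_sum]
    refine Finset.sum_congr rfl fun j _ => Finset.sum_congr rfl fun l _ => by ring
  rw [hrw]
  exact integrable_finset_sum _ fun j _ =>
    integrable_finset_sum _ fun l _ => (muGG_int hGmeas hG j l).const_mul _

lemma Ssq_val (A : Matrix (Fin d) (Fin d) ℝ) (m : Fin d) :
    ∫ ω, (∑ j, A m j * G ω j) ^ 2 ∂μ = ∑ j, A m j ^ 2 := by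
  have hrw : (fun ω => (∑ j, A m j * G ω j) ^ 2)
      = fun ω => ∑ j, ∑ l, (A m j * A m l) * (G ω j * G ω l) := by
    funext ω
    rw [sq, Finset.sum_mul_sum]
    refine Finset.sum_congr rfl fun j _ => Finset.sum_congr rfl fun l _ => by ring
  rw [hrw, integral_finset_sum _ fun j _ =>
    integrable_finset_sum _ fun l _ => (muGG_int hGmeas hG j l).const_mul _]
  refine Finset.sum_congr rfl fun j _ => ?_
  rw [integral_finset_sum _ fun l _ => (muGG_int hGmeas hG j l).const_mul _]
  have : ∀ l : Fin d, ∫ ω, (A m j * A m l) * (G ω j * G ω l) ∂μ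
      = if j = l then A m j ^ 2 else 0 := by
    intro l
    rw [integral_const_mul, muGG hGmeas hG j l]
    by_cases hjl : j = l
    · subst hjl; simp [sq]
    · simp [hjl]
  rw [Finset.sum_congr rfl fun l _ => this l]
  simp

lemma Phi_meas (u : Fin d → ℝ) (A : Matrix (Fin d) (Fin d) ℝ) :
    Measurable (fun ω => vnorm (fun m => u m + A.mulVec (G ω) m)) := by
  refine continuous_vnorm.measurable.comp ?_
  refine measurable_pi_lambda _ fun m => ?_
  have : (fun ω => u m + A.mulVec (G ω) m) = fun ω => u m + ∑ j, A m j * G ω j := rfl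
  rw [this]
  exact measurable_const.add
    (Finset.measurable_sum _ fun j _ => ((measurable_pi_apply j).comp hGmeas).const_mul _)

lemma Phi_sq_int (u : Fin d → ℝ) (A : Matrix (Fin d) (Fin d) ℝ) :
    Integrable (fun ω => vnorm (fun m => u m + A.mulVec (G ω) m) ^ 2) μ := by
  have hrw : (fun ω => vnorm (fun m => u m + A.mulVec (G ω) m) ^ 2)
      = fun ω => ∑ m, (u m ^ 2 + 2 * u m * (∑ j, A m j * G ω j)
          + (∑ j, A m j * G ω j) ^ 2) := by
    funext ω
    rw [sq_vnorm]
    refine Finset.sum_congr rfl fun m _ => ?_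
    have : A.mulVec (G ω) m = ∑ j, A m j * G ω j := rfl
    rw [this]; ring
  rw [hrw]
  refine integrable_finset_sum _ fun m _ => ?_
  exact ((integrable_const _).add
    (((S_int hGmeas hG A m).const_mul _))).add (Ssq_int hGmeas hG A m)

lemma Phi_sq_val (u : Fin d → ℝ) (A : Matrix (Fin d) (Fin d) ℝ) :
    ∫ ω, vnorm (fun m => u m + A.mulVec (G ω) m) ^ 2 ∂μ
      = vnorm u ^ 2 + frobNorm A ^ 2 := by
  have hrw : (fun ω => vnorm (fun m => u m + A.mulVec (G ω) m) ^ 2)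
      = fun ω => ∑ m, (u m ^ 2 + 2 * u m * (∑ j, A m j * G ω j)
          + (∑ j, A m j * G ω j) ^ 2) := by
    funext ω
    rw [sq_vnorm]
    refine Finset.sum_congr rfl fun m _ => ?_
    have : A.mulVec (G ω) m = ∑ j, A m j * G ω j := rfl
    rw [this]; ring
  have hInt : ∀ m ∈ Finset.univ, Integrable (fun ω => u m ^ 2
      + 2 * u m * (∑ j, A m j * G ω j) + (∑ j, A m j * G ω j) ^ 2) μ := fun m _ =>
    ((integrable_const _).add ((S_int hGmeas hG A m).const_mul _)).add (Ssq_int hGmeas hG A m)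
  rw [hrw, integral_finset_sum Finset.univ hInt]
  have hterm : ∀ m : Fin d, ∫ ω, (u m ^ 2 + 2 * u m * (∑ j, A m j * G ω j)
      + (∑ j, A m j * G ω j) ^ 2) ∂μ = u m ^ 2 + ∑ j, A m j ^ 2 := by
    intro m
    rw [integral_add (f := fun ω => u m ^ 2 + 2 * u m * (∑ j, A m j * G ω j))
        (g := fun ω => (∑ j, A m j * G ω j) ^ 2)
        ((integrable_const _).add ((S_int hGmeas hG A m).const_mul _))
        (Ssq_int hGmeas hG A m),
      integral_add (f := fun _ => u m ^ 2) (g := fun ω => 2 * u m * (∑ j, A m j * G ω j))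
        (integrable_const _) ((S_int hGmeas hG A m).const_mul _),
      integral_const, integral_const_mul, S_zero hGmeas hG, Ssq_val hGmeas hG]
    simp
  rw [Finset.sum_congr rfl fun m _ => hterm m, Finset.sum_add_distrib,
    sq_vnorm, sq_frobNorm]

lemma key_integrable (u : Fin d → ℝ) (A : Matrix (Fin d) (Fin d) ℝ) :
    Integrable (fun ω => vnorm (fun m => u m + A.mulVec (G ω) m)) μ := by
  have hm : MemLp (fun ω => vnorm (fun m => u m + A.mulVec (G ω) m)) 2 μ :=
    (memLp_two_iff_integrable_sq
      (Phi_meas hGmeas hG u A).aestronglyMeasurable).mpr (Phi_sq_int hGmeas hG u A)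
  exact hm.integrable one_le_two

lemma key_bound (u : Fin d → ℝ) (A : Matrix (Fin d) (Fin d) ℝ) :
    ∫ ω, vnorm (fun m => u m + A.mulVec (G ω) m) ∂μ
      ≤ Real.sqrt (vnorm u ^ 2 + frobNorm A ^ 2) := by
  set Φ : Ω → ℝ := fun ω => vnorm (fun m => u m + A.mulVec (G ω) m) with hΦ
  have hm : MemLp Φ 2 μ :=
    (memLp_two_iff_integrable_sq
      (Phi_meas hGmeas hG u A).aestronglyMeasurable).mpr (Phi_sq_int hGmeas hG u A)
  have hvar := variance_nonneg Φ μ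
  rw [variance_eq_sub hm] at hvar
  have hsq : (∫ ω, Φ ω ∂μ) ^ 2 ≤ ∫ ω, Φ ω ^ 2 ∂μ := by
    have h1 : μ[Φ ^ 2] = ∫ ω, Φ ω ^ 2 ∂μ := by
      congr 1
    have h2 : μ[Φ] = ∫ ω, Φ ω ∂μ := rfl
    rw [h1, h2] at hvar
    linarith
  have hnn : 0 ≤ ∫ ω, Φ ω ∂μ := integral_nonneg fun ω => vnorm_nonneg _
  rw [← Phi_sq_val hGmeas hG u A]
  exact (Real.le_sqrt hnn (integral_nonneg fun ω => sq_nonneg _)).mpr hsq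

end keysec

section eulerSec

variable {Ω : Type*} [MeasurableSpace Ω] {μ : Measure Ω} [IsProbabilityMeasure μ]
  {d : ℕ} {G : Ω → Fin d → ℝ} (hGmeas : Measurable G)
  (hG : μ.map G = Measure.pi fun _ : Fin d => gaussianReal 0 1)

lemma euler_diff_eq (b : ℝ → (Fin d → ℝ) → Fin d → ℝ)
    (σ : ℝ → (Fin d → ℝ) → Matrix (Fin d) (Fin d) ℝ) (h t : ℝ) (hh : 0 ≤ h)
    (x y gv : Fin d → ℝ) :
    eulerStep b σ h t x gv - eulerStep b σ h t y gv
      = fun m => ((x - y) + h • (b t x - b t y)) m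
          + ((Real.sqrt h • (σ t x - σ t y)).mulVec gv) m := by
  funext m
  have hmv : (Real.sqrt h • (σ t x - σ t y)).mulVec gv m
      = Real.sqrt h * ((σ t x).mulVec gv m - (σ t y).mulVec gv m) := by
    rw [Matrix.smul_mulVec, Matrix.sub_mulVec]
    simp [Pi.smul_apply, smul_eq_mul]
  simp only [Pi.sub_apply, Pi.add_apply, Pi.smul_apply, smul_eq_mul, eulerStep, hmv]
  ring

include hGmeas hG

lemma euler_int (b : ℝ → (Fin d → ℝ) → Fin d → ℝ)
    (σ : ℝ → (Fin d → ℝ) → Matrix (Fin d) (Fin d) ℝ) (h t : ℝ) (hh : 0 ≤ h)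
    (x y : Fin d → ℝ) :
    Integrable (fun ω =>
      vnorm (eulerStep b σ h t x (G ω) - eulerStep b σ h t y (G ω))) μ := by
  have heq : (fun ω => vnorm (eulerStep b σ h t x (G ω) - eulerStep b σ h t y (G ω)))
      = fun ω => vnorm (fun m => ((x - y) + h • (b t x - b t y)) m
          + ((Real.sqrt h • (σ t x - σ t y)).mulVec (G ω)) m) := by
    funext ω
    rw [euler_diff_eq b σ h t hh x y (G ω)]
  rw [heq]
  exact key_integrable hGmeas hG _ _

lemma euler_est (b : ℝ → (Fin d → ℝ) → Fin d → ℝ)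
    (σ : ℝ → (Fin d → ℝ) → Matrix (Fin d) (Fin d) ℝ) (h t : ℝ) (hh : 0 < h)
    {Cb Cσ : ℝ} (hCb : 0 < Cb) (hCσ : 0 < Cσ)
    (hb : ∀ t x y, vnorm (b t x - b t y) ≤ Cb * vnorm (x - y))
    (hσ : ∀ t x y, frobNorm (σ t x - σ t y) ≤ Cσ * vnorm (x - y))
    (x y : Fin d → ℝ) :
    ∫ ω, vnorm (eulerStep b σ h t x (G ω) - eulerStep b σ h t y (G ω)) ∂μ
      ≤ (1 + (Cb + Cσ ^ 2 / 2) * h) * vnorm (x - y) := by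
  set u : Fin d → ℝ := (x - y) + h • (b t x - b t y) with hu
  set A : Matrix (Fin d) (Fin d) ℝ := Real.sqrt h • (σ t x - σ t y) with hA
  have heq : (fun ω => vnorm (eulerStep b σ h t x (G ω) - eulerStep b σ h t y (G ω)))
      = fun ω => vnorm (fun m => u m + A.mulVec (G ω) m) := by
    funext ω
    rw [euler_diff_eq b σ h t hh.le x y (G ω)]
  rw [heq]
  refine le_trans (key_bound hGmeas hG u A) ?_
  set D := vnorm (x - y) with hD
  have hD0 : 0 ≤ D := vnorm_nonneg _
  set L : ℝ := Cb + Cσ ^ 2 / 2 with hL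
  have hL0 : 0 ≤ L := by positivity
  have hu1 : vnorm u ≤ (1 + Cb * h) * D := by
    refine le_trans (vnorm_add_le _ _) ?_
    have h2 : vnorm (h • (b t x - b t y)) = h * vnorm (b t x - b t y) := by
      rw [vnorm_smul, abs_of_nonneg hh.le]
    have h3 : vnorm (b t x - b t y) ≤ Cb * D := hb t x y
    rw [h2]
    have : h * vnorm (b t x - b t y) ≤ h * (Cb * D) :=
      mul_le_mul_of_nonneg_left h3 hh.le
    rw [hD]
    nlinarith [vnorm_nonneg (x - y)]
  have hA1 : frobNorm A ≤ Real.sqrt h * (Cσ * D) := by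
    rw [hA, frobNorm_smul, abs_of_nonneg (Real.sqrt_nonneg h)]
    exact mul_le_mul_of_nonneg_left (hσ t x y) (Real.sqrt_nonneg h)
  have hsq : vnorm u ^ 2 + frobNorm A ^ 2 ≤ ((1 + L * h) * D) ^ 2 := by
    have h1 : vnorm u ^ 2 ≤ ((1 + Cb * h) * D) ^ 2 := by
      have := vnorm_nonneg u
      nlinarith
    have h2 : frobNorm A ^ 2 ≤ h * Cσ ^ 2 * D ^ 2 := by
      have hs : Real.sqrt h ^ 2 = h := Real.sq_sqrt hh.le
      have hp := pow_le_pow_left₀ (frobNorm_nonneg A) hA1 2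
      calc frobNorm A ^ 2 ≤ (Real.sqrt h * (Cσ * D)) ^ 2 := hp
      _ = h * Cσ ^ 2 * D ^ 2 := by rw [mul_pow, hs, mul_pow]; ring
    have hkey : ((1 + Cb * h) * D) ^ 2 + h * Cσ ^ 2 * D ^ 2 ≤ ((1 + L * h) * D) ^ 2 := by
      rw [hL]
      nlinarith [sq_nonneg (Cσ ^ 2 / 2 * h * D), sq_nonneg D, sq_nonneg h, mul_pos hCb hh,
        sq_nonneg (Cσ * h * D), mul_nonneg (mul_nonneg hCb.le hh.le) hD0]
    linarith
  have hrhs0 : 0 ≤ (1 + L * h) * D := by positivity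
  calc Real.sqrt (vnorm u ^ 2 + frobNorm A ^ 2)
      ≤ Real.sqrt (((1 + L * h) * D) ^ 2) := Real.sqrt_le_sqrt hsq
  _ = (1 + L * h) * D := Real.sqrt_sq hrhs0

lemma comp_integrable (b : ℝ → (Fin d → ℝ) → Fin d → ℝ)
    (σ : ℝ → (Fin d → ℝ) → Matrix (Fin d) (Fin d) ℝ) (h t : ℝ) (hh : 0 ≤ h)
    (x : Fin d → ℝ) {W : (Fin d → ℝ) → ℝ} {c : ℝ} (hc : 0 ≤ c)
    (hW : ∀ a b', |W a - W b'| ≤ c * vnorm (a - b')) :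
    Integrable (fun ω => W (eulerStep b σ h t x (G ω))) μ := by
  set e0 : Fin d → ℝ := eulerStep b σ h t x 0 with he0
  set A0 : Matrix (Fin d) (Fin d) ℝ := Real.sqrt h • σ t x with hA0
  have hdiff : ∀ gv : Fin d → ℝ, eulerStep b σ h t x gv - e0
      = fun m => (0:ℝ) + A0.mulVec gv m := by
    intro gv
    funext m
    have hmv : A0.mulVec gv m = Real.sqrt h * (σ t x).mulVec gv m := by
      rw [hA0, Matrix.smul_mulVec]
      simp [Pi.smul_apply, smul_eq_mul]
    simp only [Pi.sub_apply, eulerStep, he0, hmv, Matrix.mulVec_zero, Pi.zero_apply]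
    ring
  have hIbound : Integrable (fun ω => |W e0| + c * vnorm (fun m => (0:ℝ)
      + A0.mulVec (G ω) m)) μ :=
    (integrable_const _).add ((key_integrable hGmeas hG 0 A0).const_mul c)
  refine Integrable.mono hIbound ?_ (Filter.Eventually.of_forall fun ω => ?_)
  · -- measurability
    have hWc : Continuous W := continuous_of_vlip hW
    refine (hWc.measurable.comp ?_).aestronglyMeasurable
    refine measurable_pi_lambda _ fun m => ?_
    have hrep : (fun ω => eulerStep b σ h t x (G ω) m)
        = fun ω => x m + b t x m * h + Real.sqrt h * (∑ j, σ t x m j * G ω j) := rfl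
    rw [hrep]
    exact measurable_const.add ((Finset.measurable_sum _ fun j _ =>
      ((measurable_pi_apply j).comp hGmeas).const_mul _).const_mul _)
  · have h1 : |W (eulerStep b σ h t x (G ω))| ≤ |W e0|
        + c * vnorm (fun m => (0:ℝ) + A0.mulVec (G ω) m) := by
      have h2 := hW (eulerStep b σ h t x (G ω)) e0
      rw [hdiff (G ω)] at h2
      have h3 := abs_sub_abs_le_abs_sub (W (eulerStep b σ h t x (G ω))) (W e0)
      linarith
    have h4 : (0:ℝ) ≤ |W e0| + c * vnorm (fun m => (0:ℝ) + A0.mulVec (G ω) m) := by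
      have := vnorm_nonneg (fun m => (0:ℝ) + A0.mulVec (G ω) m)
      positivity
    rw [Real.norm_eq_abs, Real.norm_eq_abs, abs_of_nonneg h4]
    exact h1

end eulerSec

lemma ciSup_abs_diff {ι : Type*} [Fintype ι] [Nonempty ι] (F H : ι → ℝ) (B : ℝ)
    (hB : ∀ j, |F j - H j| ≤ B) : |(⨆ j, F j) - ⨆ j, H j| ≤ B := by
  rw [abs_le]
  constructor
  · rw [neg_le, neg_sub]
    rw [sub_le_iff_le_add]
    refine ciSup_le fun j => ?_
    have h1 := (abs_le.mp (hB j)).1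
    have h2 : F j ≤ ⨆ j', F j' := le_ciSup (Finite.bddAbove_range F) j
    linarith
  · rw [sub_le_iff_le_add]
    refine ciSup_le fun j => ?_
    have h1 := (abs_le.mp (hB j)).2
    have h2 : H j ≤ ⨆ j', H j' := le_ciSup (Finite.bddAbove_range H) j
    linarith

theorem discretized_value_function_lipschitz
    {Ω : Type*} [MeasurableSpace Ω] (μ : Measure Ω) [IsProbabilityMeasure μ]
    {d : ℕ} {ι : Type*} [Fintype ι] [Nonempty ι]
    (G : Ω → Fin d → ℝ) (hGmeas : Measurable G)
    (hG : μ.map G = Measure.pi fun _ : Fin d => gaussianReal 0 1)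
    (h : ℝ) (hh : 0 < h) (N : ℕ) (ρ : ℝ) (hρ : 0 ≤ ρ)
    (b : ℝ → (Fin d → ℝ) → Fin d → ℝ) (σ : ℝ → (Fin d → ℝ) → Matrix (Fin d) (Fin d) ℝ)
    (Cb Cσ : ℝ) (hCb : 0 < Cb) (hCσ : 0 < Cσ)
    (hb : ∀ t x y, vnorm (b t x - b t y) ≤ Cb * vnorm (x - y))
    (hσ : ∀ t x y, frobNorm (σ t x - σ t y) ≤ Cσ * vnorm (x - y))
    (Cf Cg : ℝ) (hCf : 0 ≤ Cf) (hCg : 0 ≤ Cg)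
    (f : ℝ → (Fin d → ℝ) → ι → ℝ)
    (hf : ∀ t x y i, |f t x i - f t y i| ≤ Cf * Real.exp (-ρ * t) * vnorm (x - y))
    (k : ℝ → ι → ι → ℝ) (hk : ∀ t i j, 0 ≤ k t i j)
    (g : (Fin d → ℝ) → ι → ℝ)
    (hg : ∀ x y i, |g x i - g y i| ≤ Cg * Real.exp (-ρ * (N * h)) * vnorm (x - y))
    (V : ℕ → (Fin d → ℝ) → ι → ℝ)
    (hVN : ∀ x i, V N x i = g x i)
    (hVrec : ∀ n < N, ∀ x i, V n x i =
      ⨆ j : ι, (h * f (n * h) x j - k (n * h) i j +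
        ∫ ω, V (n + 1) (eulerStep b σ h (n * h) x (G ω)) j ∂μ))
    (C : ℕ → ℝ)
    (hCN : C N = Real.exp (-ρ * (N * h)) * Cg)
    (hCrec : ∀ n < N, C n =
      h * Cf * Real.exp (-ρ * (n * h)) + C (n + 1) * (1 + (Cb + Cσ ^ 2 / 2) * h)) :
    (∀ n ≤ N, ∀ x y i, |V n x i - V n y i| ≤ C n * vnorm (x - y)) ∧
      ∃ K : ℝ, 0 < K ∧ ∀ n ≤ N,
        C n ≤ K * Real.exp (-ρ * (n * h)) * Real.exp ((Cb + Cσ ^ 2 / 2) * (N * h - n * h)) := by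
  set L : ℝ := Cb + Cσ ^ 2 / 2 with hLdef
  have hL0 : 0 ≤ L := by positivity
  -- nonnegativity of C
  have hCnn : ∀ m : ℕ, ∀ n : ℕ, n + m = N → 0 ≤ C n := by
    intro m
    induction m with
    | zero =>
      intro n hn
      have hnN : n = N := by omega
      subst hnN
      rw [hCN]
      positivity
    | succ m ih =>
      intro n hn
      rw [hCrec n (by omega)]
      have h1 := ih (n + 1) (by omega)
      have h2 : (0:ℝ) ≤ h * Cf * Real.exp (-ρ * (n * h)) := by positivity
      have h3 : (0:ℝ) ≤ 1 + L * h := by positivity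
      nlinarith
  -- Part 1 : Lipschitz property by backward induction
  have main : ∀ m : ℕ, ∀ n : ℕ, n + m = N →
      ∀ x y i, |V n x i - V n y i| ≤ C n * vnorm (x - y) := by
    intro m
    induction m with
    | zero =>
      intro n hn x y i
      have hnN : n = N := by omega
      subst hnN
      rw [hVN, hVN, hCN]
      refine le_trans (hg x y i) (le_of_eq (by ring))
    | succ m ih =>
      intro n hn x y i
      have hnN : n < N := by omega
      have hLip : ∀ a b' j, |V (n + 1) a j - V (n + 1) b' j| ≤ C (n + 1) * vnorm (a - b') :=
        fun a b' j => ih (n + 1) (by omega) a b' j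
      have hC1 : 0 ≤ C (n + 1) := hCnn m (n + 1) (by omega)
      rw [hVrec n hnN x i, hVrec n hnN y i]
      refine ciSup_abs_diff _ _ _ fun j => ?_
      have IntX : Integrable (fun ω => V (n + 1) (eulerStep b σ h (n * h) x (G ω)) j) μ :=
        comp_integrable hGmeas hG b σ h (n * h) hh.le x hC1 (fun a b' => hLip a b' j)
      have IntY : Integrable (fun ω => V (n + 1) (eulerStep b σ h (n * h) y (G ω)) j) μ :=
        comp_integrable hGmeas hG b σ h (n * h) hh.le y hC1 (fun a b' => hLip a b' j)
      set Ix := ∫ ω, V (n + 1) (eulerStep b σ h (n * h) x (G ω)) j ∂μ with hIx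
      set Iy := ∫ ω, V (n + 1) (eulerStep b σ h (n * h) y (G ω)) j ∂μ with hIy
      have hre : (h * f (n * h) x j - k (n * h) i j + Ix)
          - (h * f (n * h) y j - k (n * h) i j + Iy)
          = h * (f (n * h) x j - f (n * h) y j) + (Ix - Iy) := by ring
      rw [hre]
      have habs : |h * (f (n * h) x j - f (n * h) y j) + (Ix - Iy)|
          ≤ h * |f (n * h) x j - f (n * h) y j| + |Ix - Iy| := by
        refine le_trans (abs_add_le _ _) ?_
        rw [abs_mul, abs_of_nonneg hh.le]
      have hfb : h * |f (n * h) x j - f (n * h) y j|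
          ≤ h * (Cf * Real.exp (-ρ * (n * h)) * vnorm (x - y)) :=
        mul_le_mul_of_nonneg_left (hf (n * h) x y j) hh.le
      have hIb : |Ix - Iy| ≤ C (n + 1) * ((1 + L * h) * vnorm (x - y)) := by
        rw [hIx, hIy, ← integral_sub IntX IntY]
        have h5 : |∫ ω, (V (n + 1) (eulerStep b σ h (n * h) x (G ω)) j
            - V (n + 1) (eulerStep b σ h (n * h) y (G ω)) j) ∂μ|
            ≤ ∫ ω, |V (n + 1) (eulerStep b σ h (n * h) x (G ω)) j
              - V (n + 1) (eulerStep b σ h (n * h) y (G ω)) j| ∂μ := by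
          simpa [Real.norm_eq_abs] using
            norm_integral_le_integral_norm (μ := μ)
              (f := fun ω => V (n + 1) (eulerStep b σ h (n * h) x (G ω)) j
                - V (n + 1) (eulerStep b σ h (n * h) y (G ω)) j)
        have h6 : ∫ ω, |V (n + 1) (eulerStep b σ h (n * h) x (G ω)) j
              - V (n + 1) (eulerStep b σ h (n * h) y (G ω)) j| ∂μ
            ≤ ∫ ω, C (n + 1) * vnorm (eulerStep b σ h (n * h) x (G ω)
              - eulerStep b σ h (n * h) y (G ω)) ∂μ := by
          refine integral_mono (IntX.sub IntY).abs
            ((euler_int hGmeas hG b σ h (n * h) hh.le x y).const_mul _) fun ω => ?_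
          exact hLip _ _ j
        have h7 : ∫ ω, C (n + 1) * vnorm (eulerStep b σ h (n * h) x (G ω)
              - eulerStep b σ h (n * h) y (G ω)) ∂μ
            ≤ C (n + 1) * ((1 + L * h) * vnorm (x - y)) := by
          rw [integral_const_mul]
          exact mul_le_mul_of_nonneg_left
            (euler_est hGmeas hG b σ h (n * h) hh hCb hCσ hb hσ x y) hC1
        linarith
      have hfinal : C n * vnorm (x - y)
          = h * (Cf * Real.exp (-ρ * (n * h)) * vnorm (x - y))
            + C (n + 1) * ((1 + L * h) * vnorm (x - y)) := by
        rw [hCrec n hnN]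
        ring
      linarith
  have part1 : ∀ n ≤ N, ∀ x y i, |V n x i - V n y i| ≤ C n * vnorm (x - y) :=
    fun n hn => main (N - n) n (by omega)
  -- Part 2 : bound on C
  have part2 : ∀ m : ℕ, ∀ n : ℕ, n + m = N →
      C n ≤ (Cg + Cf * (m * h)) * Real.exp (-ρ * (n * h))
        * Real.exp (L * (N * h - n * h)) := by
    intro m
    induction m with
    | zero =>
      intro n hn
      have hnN : n = N := by omega
      subst hnN
      rw [hCN]
      push_cast
      rw [sub_self, mul_zero, Real.exp_zero]
      exact le_of_eq (by ring)
    | succ m ih =>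
      intro n hn
      have hnN : n < N := by omega
      have ih' := ih (n + 1) (by omega)
      set B : ℝ := Cg + Cf * (m * h) with hB
      have hB0 : 0 ≤ B := by positivity
      set e0 : ℝ := Real.exp (-ρ * (n * h)) with he0
      set e1 : ℝ := Real.exp (-ρ * ((n + 1 : ℕ) * h)) with he1
      set X0 : ℝ := Real.exp (L * (N * h - n * h)) with hX0
      set X1 : ℝ := Real.exp (L * (N * h - (n + 1 : ℕ) * h)) with hX1
      have h1Lh : (0:ℝ) ≤ 1 + L * h := by positivity
      have he : e1 ≤ e0 := by
        rw [he0, he1]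
        refine Real.exp_le_exp.mpr ?_
        push_cast
        nlinarith
      have hLh : 1 + L * h ≤ Real.exp (L * h) := by
        have := Real.add_one_le_exp (L * h)
        linarith
      have hXX : X1 * Real.exp (L * h) = X0 := by
        rw [hX1, hX0, ← Real.exp_add]
        congr 1
        push_cast
        ring
      have hX00 : (1:ℝ) ≤ X0 := by
        rw [hX0]
        refine Real.one_le_exp ?_
        have hnle : (n : ℝ) ≤ (N : ℝ) := by exact_mod_cast (by omega : n ≤ N)
        have : (0:ℝ) ≤ N * h - n * h := by nlinarith
        positivity
      have hX10 : (0:ℝ) ≤ X1 := (Real.exp_pos _).le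
      have he00 : (0:ℝ) ≤ e0 := (Real.exp_pos _).le
      have step1 : C n = h * Cf * e0 + C (n + 1) * (1 + L * h) := hCrec n hnN
      have step2 : C (n + 1) * (1 + L * h) ≤ (B * e1 * X1) * (1 + L * h) :=
        mul_le_mul_of_nonneg_right ih' h1Lh
      have step3 : (B * e1 * X1) * (1 + L * h) ≤ (B * e0 * X1) * (1 + L * h) := by
        have hbe : B * e1 ≤ B * e0 := mul_le_mul_of_nonneg_left he hB0
        exact mul_le_mul_of_nonneg_right (mul_le_mul_of_nonneg_right hbe hX10) h1Lh
      have step4 : (B * e0 * X1) * (1 + L * h) ≤ (B * e0 * X1) * Real.exp (L * h) := by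
        have hkn : 0 ≤ B * e0 * X1 := by positivity
        exact mul_le_mul_of_nonneg_left hLh hkn
      have step5 : (B * e0 * X1) * Real.exp (L * h) = B * e0 * X0 := by
        rw [mul_assoc (B * e0), hXX]
      have step6 : h * Cf * e0 ≤ h * Cf * e0 * X0 := by
        have : 0 ≤ h * Cf * e0 := by positivity
        nlinarith
      have hgoal : (Cg + Cf * ((m + 1 : ℕ) * h)) * e0 * X0
          = (B + Cf * h) * e0 * X0 := by
        rw [hB]
        push_cast
        ring
      rw [hgoal]
      have : C n ≤ h * Cf * e0 * X0 + B * e0 * X0 := by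
        rw [step1]
        have := le_trans step2 (le_trans step3 step4)
        rw [step5] at this
        linarith
      calc C n ≤ h * Cf * e0 * X0 + B * e0 * X0 := this
      _ = (B + Cf * h) * e0 * X0 := by ring
  refine ⟨part1, Cg + Cf * (N * h) + 1, by positivity, fun n hn => ?_⟩
  have h2 := part2 (N - n) n (by omega)
  have hmle : ((N - n : ℕ) : ℝ) ≤ (N : ℝ) := by
    exact_mod_cast Nat.sub_le N n
  have hKK : Cg + Cf * ((N - n : ℕ) * h) ≤ Cg + Cf * (N * h) + 1 := by
    have : Cf * (((N - n : ℕ) : ℝ) * h) ≤ Cf * ((N : ℝ) * h) :=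
      mul_le_mul_of_nonneg_left (mul_le_mul_of_nonneg_right hmle hh.le) hCf
    linarith
  have hee : (0:ℝ) ≤ Real.exp (-ρ * (n * h)) := (Real.exp_pos _).le
  have hXXe : (0:ℝ) ≤ Real.exp (L * (N * h - n * h)) := (Real.exp_pos _).le
  calc C n ≤ (Cg + Cf * ((N - n : ℕ) * h)) * Real.exp (-ρ * (n * h))
      * Real.exp (L * (N * h - n * h)) := h2
  _ ≤ (Cg + Cf * (N * h) + 1) * Real.exp (-ρ * (n * h))
      * Real.exp (L * (N * h - n * h)) := by
    exact mul_le_mul_of_nonneg_right (mul_le_mul_of_nonneg_right hKK hee) hXXe
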